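/- Flow feasibility equals path feasibility in the constructed graph: In the graph G constructed from a Set Cover instance, equip each arc a ∈ A_U with capacity cp(a) = 1 and each arc a ∈ A_𝒮 with capacity cp(a) = |U|. For every subset A' ⊆ A, the following are equivalent: (i) there exists a family of nonnegative rational flows (f_u)_{u ∈ U}, each f_u : A → ℚ≥0 supported on A', such that each f_u satisfies flow conservation at every vertex other than v_u and z and routes one unit of flow from v_u to z, and Σ_{u ∈ U} f_u(a) ≤ cp(a) for every arc a ∈ A; (ii) for every u ∈ U there is a directed path from v_u to z all of whose arcs lie in A'. -/

import Mathlib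

/-- Vertices of the graph constructed from a Set Cover instance with universe `U`,
family of sets indexed by `ι`, and path-length parameter `q`:
`item u` is `v_u`, `path i j` is `v^j_{S_i}`, and `sink` is `z`. -/
inductive Vtx (U ι : Type) (q : ℕ) : Type where
  | item : U → Vtx U ι q
  | path : ι → Fin (q + 1) → Vtx U ι q
  | sink : Vtx U ι q
  deriving DecidableEq, Fintype

variable {U ι : Type} [Fintype U] [Fintype ι] [DecidableEq U] [DecidableEq ι]

/-- The arcs `A_U = {(v_u, v^0_S) | S ∈ 𝒮, u ∈ S}`. -/
def AU (Sets : ι → Finset U) (q : ℕ) : Finset (Vtx U ι q × Vtx U ι q) :=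
  Finset.univ.biUnion fun i => (Sets i).image fun u => (Vtx.item u, Vtx.path i 0)

/-- The path `P_S = {(v^0_S,v^1_S), …, (v^{q-1}_S,v^q_S), (v^q_S, z)}` for `S = S_i`. -/
def Ppath (U ι : Type) [DecidableEq U] [DecidableEq ι] (q : ℕ) (i : ι) :
    Finset (Vtx U ι q × Vtx U ι q) :=
  ((Finset.univ : Finset (Fin q)).image fun j =>
      ((Vtx.path i j.castSucc : Vtx U ι q), Vtx.path i j.succ)) ∪
    {(Vtx.path i (Fin.last q), Vtx.sink)}

/-- The arc set `A = A_U ∪ ⋃_{S ∈ 𝒮} P_S`. -/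
def arcs (Sets : ι → Finset U) (q : ℕ) : Finset (Vtx U ι q × Vtx U ι q) :=
  AU Sets q ∪ Finset.univ.biUnion (Ppath U ι q)

/-- There is a directed path from `x` to `y` all of whose arcs lie in `A'`. -/
def Reaches {α : Type} (A' : Finset (α × α)) (x y : α) : Prop :=
  Relation.ReflTransGen (fun a b => (a, b) ∈ A') x y

/-- `A' ⊆ A` is feasible if every `v_u` can reach `z` using only arcs of `A'`. -/
def Feasible {q : ℕ} (A' : Finset (Vtx U ι q × Vtx U ι q)) : Prop :=
  ∀ u : U, Reaches A' (Vtx.item u) Vtx.sink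

/-- The number of arcs of `B` incident to `v` (in-degree plus out-degree). -/
def deg {α : Type} [DecidableEq α] (B : Finset (α × α)) (v : α) : ℕ :=
  (B.filter fun a => a.1 = v).card + (B.filter fun a => a.2 = v).card

/-- The linecard objective `obj_k(B) = Σ_v ⌈deg_B(v)/k⌉`. -/
def obj {α : Type} [Fintype α] [DecidableEq α] (k : ℕ) (B : Finset (α × α)) : ℕ :=
  ∑ v : α, deg B v ⌈/⌉ k

/-- The capacity function: arcs of `A_U` have capacity `1`, arcs of `A_𝒮` have
capacity `|U|`. -/
noncomputable def cp (Sets : ι → Finset U) (q : ℕ) (a : Vtx U ι q × Vtx U ι q) : ℚ :=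
  if a ∈ AU Sets q then 1 else (Fintype.card U : ℚ)

/-- Flow feasibility equals path feasibility in the constructed graph: there exists a family
`(f_u)_{u ∈ U}` of nonnegative flows supported on `A'`, each satisfying flow conservation at
every vertex other than `v_u` and `z`, routing one unit of flow from `v_u` to `z`, and jointly
respecting the capacities `cp` on all arcs of `A`, if and only if for every `u ∈ U` there is a
directed path from `v_u` to `z` all of whose arcs lie in `A'`. -/
lemma arcs_from_item {Sets : ι → Finset U} {q : ℕ} {u : U} {w : Vtx U ι q}
    (h : (Vtx.item u, w) ∈ arcs Sets q) : ∃ i, u ∈ Sets i ∧ w = Vtx.path i 0 := by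
  simp only [arcs, AU, Ppath, Finset.mem_union, Finset.mem_biUnion, Finset.mem_image,
    Finset.mem_univ, true_and, Finset.mem_singleton, Prod.ext_iff] at h
  rcases h with ⟨i, u', hu', h1, h2⟩ | ⟨i, ⟨j', h1, _⟩ | ⟨h1, _⟩⟩
  · cases h1; exact ⟨i, hu', h2.symm⟩
  · exact absurd h1 (by simp)
  · exact absurd h1 (by simp)

lemma arcs_from_path {Sets : ι → Finset U} {q : ℕ} {i : ι} {j : Fin (q+1)} {w : Vtx U ι q}
    (h : (Vtx.path i j, w) ∈ arcs Sets q) :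
    (∃ j' : Fin q, j = j'.castSucc ∧ w = Vtx.path i j'.succ) ∨
      (j = Fin.last q ∧ w = Vtx.sink) := by
  simp only [arcs, AU, Ppath, Finset.mem_union, Finset.mem_biUnion, Finset.mem_image,
    Finset.mem_univ, true_and, Finset.mem_singleton, Prod.ext_iff] at h
  rcases h with ⟨i', u', _, h1, _⟩ | ⟨i', ⟨j', h1, h2⟩ | ⟨h1, h2⟩⟩
  · exact absurd h1 (by simp)
  · obtain ⟨hi, hj⟩ := Vtx.path.inj h1.symm
    cases hi
    exact Or.inl ⟨j', hj, h2.symm⟩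
  · obtain ⟨hi, hj⟩ := Vtx.path.inj h1.symm
    cases hi
    exact Or.inr ⟨hj.symm, h2⟩

lemma reach_tail {Sets : ι → Finset U} {q : ℕ} {A' : Finset (Vtx U ι q × Vtx U ι q)}
    (hA' : A' ⊆ arcs Sets q) (i : ι) :
    ∀ n (j : Fin (q+1)), q - j.val ≤ n → Reaches A' (Vtx.path i j) Vtx.sink →
      (∀ j' : Fin q, (j : ℕ) ≤ j'.val →
          (Vtx.path i j'.castSucc, Vtx.path i j'.succ) ∈ A') ∧
        (Vtx.path i (Fin.last q), Vtx.sink) ∈ A' := by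
  intro n
  induction n with
  | zero =>
    intro j hn hr
    rcases Relation.ReflTransGen.cases_head hr with heq | ⟨w, hstep, hr'⟩
    · exact absurd heq (by simp)
    rcases arcs_from_path (hA' hstep) with ⟨j₀, hj, hw⟩ | ⟨hj, hw⟩
    · exfalso
      have := j₀.isLt
      have : (j : ℕ) = (j₀ : ℕ) := by rw [hj]; simp
      omega
    · subst hj hw
      refine ⟨fun j' hle => absurd hle ?_, hstep⟩
      have := j'.isLt
      simp only [Fin.val_last] at *
      omega
  | succ n ih =>
    intro j hn hr
    rcases Relation.ReflTransGen.cases_head hr with heq | ⟨w, hstep, hr'⟩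
    · exact absurd heq (by simp)
    rcases arcs_from_path (hA' hstep) with ⟨j₀, hj, hw⟩ | ⟨hj, hw⟩
    · subst hj hw
      have hval : ((j₀.castSucc : Fin (q+1)) : ℕ) = (j₀ : ℕ) := by simp
      have hsuccval : ((j₀.succ : Fin (q+1)) : ℕ) = (j₀ : ℕ) + 1 := by simp
      have hlt := j₀.isLt
      obtain ⟨ha, hb⟩ := ih j₀.succ (by omega) hr'
      refine ⟨fun j' hle => ?_, hb⟩
      rcases eq_or_lt_of_le hle with heq | hlt'
      · have : j' = j₀ := Fin.ext (by omega)
        subst this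
        exact hstep
      · exact ha j' (by omega)
    · subst hj hw
      refine ⟨fun j' hle => absurd hle ?_, hstep⟩
      have := j'.isLt
      simp only [Fin.val_last] at *
      omega

lemma reach_structure {Sets : ι → Finset U} {q : ℕ} {A' : Finset (Vtx U ι q × Vtx U ι q)}
    (hA' : A' ⊆ arcs Sets q) {u : U} (h : Reaches A' (Vtx.item u) Vtx.sink) :
    ∃ i : ι, (Vtx.item u, Vtx.path i 0) ∈ A' ∧
      (∀ j' : Fin q, (Vtx.path i j'.castSucc, Vtx.path i j'.succ) ∈ A') ∧
      (Vtx.path i (Fin.last q), Vtx.sink) ∈ A' := by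
  rcases Relation.ReflTransGen.cases_head h with heq | ⟨w, hstep, hr⟩
  · exact absurd heq (by simp)
  obtain ⟨i, _, hw⟩ := arcs_from_item (hA' hstep)
  subst hw
  obtain ⟨ha, hb⟩ := reach_tail hA' i q 0 (by simp) hr
  exact ⟨i, hstep, fun j' => ha j' (by simp), hb⟩

/-- the successor along the canonical path through `S_i`. -/
def pnxt {U ι : Type} {q : ℕ} (i : ι) : Vtx U ι q → Vtx U ι q
  | Vtx.item _ => Vtx.path i 0
  | Vtx.path _ j => if j = Fin.last q then Vtx.sink else Vtx.path i (j + 1)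
  | Vtx.sink => Vtx.sink

/-- the vertices of the canonical path for `u` except the sink. -/
def pset {U ι : Type} [Fintype ι] [DecidableEq U] [DecidableEq ι] {q : ℕ}
    (u : U) (i : ι) : Finset (Vtx U ι q) :=
  insert (Vtx.item u) (Finset.univ.image (Vtx.path i))

lemma fin_add_one_ne_zero {q : ℕ} {j : Fin (q+1)} (h : j ≠ Fin.last q) : j + 1 ≠ 0 := by
  intro hc
  exact h (by rwa [← Fin.last_add_one q, add_left_inj] at hc)

lemma fin_sub_one_ne_last {q : ℕ} {j : Fin (q+1)} (h : j ≠ 0) : j - 1 ≠ Fin.last q := by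
  intro hc
  apply h
  rw [← sub_add_cancel j 1, hc, Fin.last_add_one]

lemma castPred_succ {q : ℕ} (j : Fin (q+1)) (h : j ≠ Fin.last q) :
    (j.castPred h).succ = j + 1 := by
  ext; simp [Fin.val_add_one, h]

section main
variable {q : ℕ}

lemma sum_out (u : U) (i : ι) (v : Vtx U ι q) :
    (∑ w : Vtx U ι q, if v ∈ pset u i ∧ w = pnxt i v then (1:ℚ) else 0)
      = if v ∈ pset u i then 1 else 0 := by
  by_cases h : v ∈ pset u i <;> simp [h]

lemma sum_in (u : U) (i : ι) (v : Vtx U ι q) :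
    (∑ w : Vtx U ι q, if w ∈ pset u i ∧ v = pnxt i w then (1:ℚ) else 0)
      = if v ∈ insert Vtx.sink (Finset.univ.image (Vtx.path i)) then 1 else 0 := by
  classical
  set T : Finset (Vtx U ι q) := insert Vtx.sink (Finset.univ.image (Vtx.path i)) with hT
  -- predecessor function
  set prv : Vtx U ι q → Vtx U ι q := fun v =>
    match v with
    | Vtx.sink => Vtx.path i (Fin.last q)
    | Vtx.path _ j => if j = 0 then Vtx.item u else Vtx.path i (j - 1)
    | Vtx.item _ => Vtx.item u
    with hprv
  have hiff : ∀ w : Vtx U ι q, (w ∈ pset u i ∧ v = pnxt i w) ↔ (v ∈ T ∧ w = prv v) := by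
    intro w
    constructor
    · rintro ⟨hw, rfl⟩
      match w with
      | Vtx.item u' =>
        have : u' = u := by simpa [pset] using hw
        subst this
        simp [pnxt, hprv, hT]
      | Vtx.path i' j =>
        have : i' = i := by
          rcases Finset.mem_insert.mp hw with h | h
          · exact absurd h (by simp)
          · obtain ⟨j₀, _, hj⟩ := Finset.mem_image.mp h
            exact (Vtx.path.inj hj.symm).1
        subst this
        by_cases hl : j = Fin.last q
        · subst hl; simp [pnxt, hprv, hT]
        · simp only [pnxt, if_neg hl]
          refine ⟨by simp [hT], ?_⟩
          simp only [hprv]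
          rw [if_neg (fin_add_one_ne_zero hl), add_sub_cancel_right]
      | Vtx.sink => exact absurd hw (by simp [pset])
    · rintro ⟨hv, rfl⟩
      match v with
      | Vtx.item u' => exact absurd hv (by simp [hT])
      | Vtx.sink =>
        simp only [hprv]
        refine ⟨by simp [pset], ?_⟩
        simp [pnxt]
      | Vtx.path i' j =>
        have : i' = i := by
          rcases Finset.mem_insert.mp hv with h | h
          · exact absurd h (by simp)
          · obtain ⟨j₀, _, hj⟩ := Finset.mem_image.mp h
            exact (Vtx.path.inj hj.symm).1
        subst this
        by_cases h0 : j = 0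
        · subst h0
          simp only [hprv, if_pos rfl]
          exact ⟨by simp [pset], by simp [pnxt]⟩
        · simp only [hprv, if_neg h0]
          refine ⟨by simp [pset], ?_⟩
          simp only [pnxt, if_neg (fin_sub_one_ne_last h0)]
          rw [sub_add_cancel]
  calc (∑ w : Vtx U ι q, if w ∈ pset u i ∧ v = pnxt i w then (1:ℚ) else 0)
      = ∑ w : Vtx U ι q, if v ∈ T ∧ w = prv v then (1:ℚ) else 0 := by
        refine Finset.sum_congr rfl fun w _ => ?_
        rw [if_congr (hiff w) rfl rfl]
    _ = if v ∈ T then 1 else 0 := by by_cases h : v ∈ T <;> simp [h]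

end main

theorem flow_feasibility_iff_path_feasibility (Sets : ι → Finset U) (q : ℕ)
    (A' : Finset (Vtx U ι q × Vtx U ι q)) (hA' : A' ⊆ arcs Sets q) :
    (∃ f : U → Vtx U ι q → Vtx U ι q → ℚ,
      (∀ u x y, 0 ≤ f u x y) ∧
      (∀ u x y, (x, y) ∉ A' → f u x y = 0) ∧
      (∀ (u : U) (v : Vtx U ι q), v ≠ Vtx.item u → v ≠ Vtx.sink →
        ∑ w : Vtx U ι q, f u w v = ∑ w : Vtx U ι q, f u v w) ∧
      (∀ u : U,
        ∑ w : Vtx U ι q, f u (Vtx.item u) w - ∑ w : Vtx U ι q, f u w (Vtx.item u) = 1) ∧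
      (∀ u : U,
        ∑ w : Vtx U ι q, f u w Vtx.sink - ∑ w : Vtx U ι q, f u Vtx.sink w = 1) ∧
      (∀ a ∈ arcs Sets q, ∑ u : U, f u a.1 a.2 ≤ cp Sets q a)) ↔
    ∀ u : U, Reaches A' (Vtx.item u) Vtx.sink := by
  classical
  constructor
  · rintro ⟨f, hpos, hsupp, hcons, hsrc, _, _⟩ u
    set r : Vtx U ι q → Vtx U ι q → Prop := fun a b => 0 < f u a b with hrdef
    set R : Finset (Vtx U ι q) :=
      Finset.univ.filter (fun v => Relation.ReflTransGen r (Vtx.item u) v) with hRdef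
    by_contra hns
    have hrA : ∀ a b, r a b → (a, b) ∈ A' := by
      intro a b hab
      by_contra hc
      have h0 : f u a b = 0 := hsupp u a b hc
      have : ¬ r a b := by simp [hrdef, h0]
      exact this hab
    have hsinkR : Vtx.sink ∉ R := by
      intro h
      exact hns (Relation.ReflTransGen.mono hrA _ _ ((Finset.mem_filter.mp h).2))
    have hitem : Vtx.item u ∈ R :=
      Finset.mem_filter.mpr ⟨Finset.mem_univ _, Relation.ReflTransGen.refl⟩
    have key : ∑ v ∈ R, (∑ w : Vtx U ι q, f u v w - ∑ w : Vtx U ι q, f u w v) = 1 := by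
      rw [Finset.sum_eq_single (Vtx.item u)]
      · exact hsrc u
      · intro v hv hne
        rw [hcons u v hne (fun hvs => hsinkR (hvs ▸ hv)), sub_self]
      · intro h; exact absurd hitem h
    have e1 : ∑ v ∈ R, ∑ w : Vtx U ι q, f u v w
        = ∑ v ∈ R, ∑ w ∈ R, f u v w + ∑ v ∈ R, ∑ w ∈ Rᶜ, f u v w := by
      rw [← Finset.sum_add_distrib]
      exact Finset.sum_congr rfl fun v _ => (Finset.sum_add_sum_compl R _).symm
    have e2 : ∑ v ∈ R, ∑ w : Vtx U ι q, f u w v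
        = ∑ v ∈ R, ∑ w ∈ R, f u w v + ∑ v ∈ R, ∑ w ∈ Rᶜ, f u w v := by
      rw [← Finset.sum_add_distrib]
      exact Finset.sum_congr rfl fun v _ => (Finset.sum_add_sum_compl R _).symm
    have e3 : ∑ v ∈ R, ∑ w ∈ R, f u w v = ∑ v ∈ R, ∑ w ∈ R, f u v w := Finset.sum_comm
    have e4 : ∑ v ∈ R, ∑ w ∈ Rᶜ, f u v w = 0 := by
      refine Finset.sum_eq_zero fun v hv => Finset.sum_eq_zero fun w hw => ?_
      by_contra h
      have hpos' : 0 < f u v w := lt_of_le_of_ne (hpos u v w) (Ne.symm h)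
      have hwR : w ∈ R := Finset.mem_filter.mpr
        ⟨Finset.mem_univ _, ((Finset.mem_filter.mp hv).2).tail hpos'⟩
      exact (Finset.mem_compl.mp hw) hwR
    have hB : 0 ≤ ∑ v ∈ R, ∑ w ∈ Rᶜ, f u w v :=
      Finset.sum_nonneg fun v _ => Finset.sum_nonneg fun w _ => hpos u w v
    rw [Finset.sum_sub_distrib, e1, e2, e3, e4] at key
    linarith
  · intro hreach
    choose i h1 h2 h3 using fun u => reach_structure hA' (hreach u)
    refine ⟨fun u x y => if x ∈ pset u (i u) ∧ y = pnxt (i u) x then 1 else 0,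
      ?_, ?_, ?_, ?_, ?_, ?_⟩
    · intro u x y
      dsimp only
      split <;> norm_num
    · -- support
      intro u x y hxy
      dsimp only
      rw [if_neg]
      rintro ⟨hx, rfl⟩
      apply hxy
      match x with
      | Vtx.item u' =>
        have huu : u' = u := by simpa [pset] using hx
        simp only [pnxt]
        rw [huu]
        exact h1 u
      | Vtx.path i' j =>
        have : i' = i u := by
          rcases Finset.mem_insert.mp hx with h | h
          · exact absurd h (by simp)
          · obtain ⟨j₀, _, hj⟩ := Finset.mem_image.mp h
            exact (Vtx.path.inj hj.symm).1
        subst this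
        by_cases hl : j = Fin.last q
        · subst hl
          simpa [pnxt] using h3 u
        · simp only [pnxt, if_neg hl]
          have := h2 u (j.castPred hl)
          rwa [Fin.castSucc_castPred, castPred_succ j hl] at this
      | Vtx.sink => exact absurd hx (by simp [pset])
    · -- conservation
      intro u v hvi hvs
      dsimp only
      rw [sum_out, sum_in]
      congr 1
      · apply propext
        match v with
        | Vtx.item u' =>
          have hne : u' ≠ u := fun h => hvi (by rw [h])
          simp [pset, hne]
        | Vtx.path i' j => simp [pset]
        | Vtx.sink => exact absurd rfl hvs
    · -- source
      intro u
      dsimp only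
      rw [sum_out, sum_in, if_pos (by simp [pset]), if_neg (by simp)]
      norm_num
    · -- sink
      intro u
      dsimp only
      rw [sum_out, sum_in, if_pos (by simp), if_neg (by simp [pset])]
      norm_num
    · -- capacity
      intro a ha
      dsimp only
      by_cases hAU : a ∈ AU Sets q
      · simp only [cp, if_pos hAU]
        simp only [AU, Finset.mem_biUnion, Finset.mem_image, Finset.mem_univ,
          true_and] at hAU
        obtain ⟨i₀, u₀, hu₀, hae⟩ := hAU
        rw [← hae]
        rw [Finset.sum_eq_single u₀]
        · split <;> norm_num
        · intro u' _ hne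
          rw [if_neg]
          rintro ⟨hx, _⟩
          rcases Finset.mem_insert.mp hx with h | h
          · exact hne (Vtx.item.inj h).symm
          · obtain ⟨j₀, _, hj⟩ := Finset.mem_image.mp h
            exact absurd hj (by simp)
        · intro h; exact absurd (Finset.mem_univ u₀) h
      · simp only [cp, if_neg hAU]
        calc ∑ u : U, (if a.1 ∈ pset u (i u) ∧ a.2 = pnxt (i u) a.1 then (1:ℚ) else 0)
            ≤ ∑ _u : U, (1:ℚ) := by
              refine Finset.sum_le_sum fun u _ => ?_
              split <;> norm_num
          _ = (Fintype.card U : ℚ) := by simp
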